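/- arXiv:1411.6667 — 2 statements merged into one kernel-verified Lean document; each statement's English description precedes it below -/
import Mathlib

section
/- Let δ ∈ (0,1/2) and let m be a positive integer such that δm is a positive integer. Then there exists a code C ⊆ {0,1}^m with |C| ≥ 2^{(1 − 2h(δ))m}/(2δm) such that every two distinct codewords of C have longest common subsequence of length less than (1−δ)m; equivalently, C can be corrected from a δ fraction of worst-case deletions. (Theorem 2.4 of the paper, binary case: rate 1 − 2h(δ) − log(δm)/m, up to an additive O(1/m) in the rate.) -/
/-- `s` (of length `ℓ`) is a subsequence of `t` (of length `m`): there are indices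
`i₁ < ⋯ < i_ℓ` with `t (i_j) = s j` for all `j`. -/
def IsSubseq {α : Type*} {ℓ m : ℕ} (s : Fin ℓ → α) (t : Fin m → α) : Prop :=
  ∃ f : Fin ℓ → Fin m, StrictMono f ∧ ∀ j, t (f j) = s j

/-- The binary entropy function `h(x) = x log₂(1/x) + (1-x) log₂(1/(1-x))`. -/
noncomputable def binEnt (x : ℝ) : ℝ :=
  x * Real.logb 2 (1 / x) + (1 - x) * Real.logb 2 (1 / (1 - x))

open Finset

lemma fin2_eq_of_ne {a b c : Fin 2} (h1 : a ≠ c) (h2 : b ≠ c) : a = b := by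
  revert a b c; decide

lemma greedy_lemma {α : Type*} [Fintype α] [DecidableEq α] (r : α → α → Prop) [DecidableRel r]
    (hsym : ∀ u v, r u v → r v u) (hrefl : ∀ u, r u u) (D : ℕ)
    (hD : ∀ u, (Finset.univ.filter (r u)).card ≤ D) :
    ∀ s : Finset α, ∃ t ⊆ s, (∀ u ∈ t, ∀ v ∈ t, u ≠ v → ¬ r u v) ∧ s.card ≤ t.card * D := by
  intro s
  induction s using Finset.strongInduction with
  | _ s ih =>
    rcases s.eq_empty_or_nonempty with rfl | ⟨u, hu⟩
    · exact ⟨∅, by simp⟩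
    · set N := s.filter (r u) with hN
      have hNs : N ⊆ s := Finset.filter_subset _ _
      have huN : u ∈ N := Finset.mem_filter.2 ⟨hu, hrefl u⟩
      have hlt : s \ N ⊂ s := by
        apply Finset.sdiff_ssubset hNs ⟨u, huN⟩
      obtain ⟨t, hts, hind, hcard⟩ := ih _ hlt
      have huts : ∀ x ∈ t, x ∈ s ∧ x ∉ N := by
        intro x hx; exact Finset.mem_sdiff.1 (hts hx)
      have hut : u ∉ t := fun h => (huts u h).2 huN
      refine ⟨insert u t, ?_, ?_, ?_⟩
      · intro x hx
        rcases Finset.mem_insert.1 hx with rfl | hx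
        · exact hu
        · exact (huts x hx).1
      · intro x hx y hy hxy hrxy
        rcases Finset.mem_insert.1 hx with hx' | hx'
        · rcases Finset.mem_insert.1 hy with hy' | hy'
          · exact hxy (hx'.trans hy'.symm)
          · subst hx'
            exact (huts y hy').2 (Finset.mem_filter.2 ⟨(huts y hy').1, hrxy⟩)
        · rcases Finset.mem_insert.1 hy with hy' | hy'
          · subst hy'
            exact (huts x hx').2 (Finset.mem_filter.2 ⟨(huts x hx').1, hsym x y hrxy⟩)
          · exact hind x hx' y hy' hxy hrxy
      · have h1 : s.card ≤ (s \ N).card + N.card := by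
          rw [Finset.card_sdiff_add_card_eq_card hNs]
        have h2 : N.card ≤ D := le_trans (Finset.card_le_card (by
          intro x hx; exact Finset.mem_filter.2 ⟨Finset.mem_univ _, (Finset.mem_filter.1 hx).2⟩)) (hD u)
        have h3 : (insert u t).card = t.card + 1 := Finset.card_insert_of_notMem hut
        calc s.card ≤ (s \ N).card + N.card := h1
          _ ≤ t.card * D + D := Nat.add_le_add hcard h2
          _ = (t.card + 1) * D := by ring
          _ = (insert u t).card * D := by rw [h3]

lemma exists_min_embed {ℓ m : ℕ} {α : Type*} {v : Fin m → α} {s : Fin ℓ → α}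
    (h : IsSubseq s v) :
    ∃ f : Fin ℓ → Fin m, StrictMono f ∧ (∀ j, v (f j) = s j) ∧
      ∀ (j : Fin ℓ) (k : Fin m), k < f j → (∀ j' : Fin ℓ, j' < j → f j' < k) → v k ≠ s j := by
  classical
  obtain ⟨f0, hf01, hf02⟩ := h
  set E : Finset (Fin ℓ → Fin m) :=
    Finset.univ.filter (fun f => StrictMono f ∧ ∀ j, v (f j) = s j) with hE
  have hne : E.Nonempty := ⟨f0, by simp [hE, hf01, hf02]⟩
  obtain ⟨f, hfE, hmin⟩ := E.exists_minimal hne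
  rw [hE, Finset.mem_filter] at hfE
  refine ⟨f, hfE.2.1, hfE.2.2, ?_⟩
  intro j k hk hlt hvk
  set g : Fin ℓ → Fin m := Function.update f j k with hg
  have hgj : g j = k := Function.update_self j k f
  have hgne : ∀ i, i ≠ j → g i = f i := fun i hi => Function.update_of_ne hi k f
  have hgsm : StrictMono g := by
    intro i i' hii'
    rcases eq_or_ne i j with rfl | hij
    · rw [hgj, hgne i' (by exact fun h => absurd (h ▸ hii') (lt_irrefl _))]
      exact lt_trans hk (hfE.2.1 hii')
    · rcases eq_or_ne i' j with rfl | hij'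
      · rw [hgj, hgne i hij]
        exact hlt i hii'
      · rw [hgne i hij, hgne i' hij']
        exact hfE.2.1 hii'
  have hgE : g ∈ E := by
    rw [hE, Finset.mem_filter]
    refine ⟨Finset.mem_univ _, hgsm, ?_⟩
    intro i
    rcases eq_or_ne i j with rfl | hij
    · rw [hgj]; exact hvk
    · rw [hgne i hij]; exact hfE.2.2 i
  have hglt : g < f := by
    constructor
    · intro i
      rcases eq_or_ne i j with rfl | hij
      · rw [hgj]; exact le_of_lt hk
      · rw [hgne i hij]
    · intro hle
      have := hle j
      rw [hgj] at this
      exact absurd hk (not_lt.2 this)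
  exact absurd (hmin hgE hglt.le) (not_le_of_gt hglt)

lemma sup_card {ℓ m : ℕ} (hℓ : 0 < ℓ) (hℓm : ℓ ≤ m) (s : Fin ℓ → Fin 2)
    [∀ v : Fin m → Fin 2, Decidable (IsSubseq s v)] :
    (Finset.univ.filter fun v : Fin m → Fin 2 => IsSubseq s v).card
      ≤ ∑ p : Fin m, Nat.choose p (ℓ - 1) * 2 ^ (m - 1 - (p : ℕ)) := by
  classical
  have hm : 0 < m := lt_of_lt_of_le hℓ hℓm
  set S := Finset.univ.filter fun v : Fin m → Fin 2 => IsSubseq s v with hS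
  set last : Fin ℓ := ⟨ℓ - 1, by omega⟩ with hlastdef
  -- minimal embedding choice
  have hex : ∀ v : Fin m → Fin 2, IsSubseq s v →
      ∃ f : Fin ℓ → Fin m, StrictMono f ∧ (∀ j, v (f j) = s j) ∧
        ∀ (j : Fin ℓ) (k : Fin m), k < f j → (∀ j' : Fin ℓ, j' < j → f j' < k) → v k ≠ s j :=
    fun v h => exists_min_embed h
  set F : (Fin m → Fin 2) → (Fin ℓ → Fin m) := fun v =>
    if h : IsSubseq s v then (hex v h).choose else fun _ => ⟨0, hm⟩ with hF
  have hFsm : ∀ v ∈ S, StrictMono (F v) := by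
    intro v hv
    have h : IsSubseq s v := (Finset.mem_filter.1 hv).2
    rw [hF]; simp only [dif_pos h]; exact (hex v h).choose_spec.1
  have hFval : ∀ v ∈ S, ∀ j, v (F v j) = s j := by
    intro v hv
    have h : IsSubseq s v := (Finset.mem_filter.1 hv).2
    rw [hF]; simp only [dif_pos h]; exact (hex v h).choose_spec.2.1
  have hFmin : ∀ v ∈ S, ∀ (j : Fin ℓ) (k : Fin m), k < F v j →
      (∀ j' : Fin ℓ, j' < j → F v j' < k) → v k ≠ s j := by
    intro v hv
    have h : IsSubseq s v := (Finset.mem_filter.1 hv).2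
    rw [hF]; simp only [dif_pos h]; exact (hex v h).choose_spec.2.2
  rw [Finset.card_eq_sum_card_fiberwise
    (f := fun v => F v last) (t := Finset.univ) (fun v _ => Finset.mem_univ _)]
  apply Finset.sum_le_sum
  intro p _
  -- fiber bound
  set W : Finset (Fin m → Fin 2) :=
    Finset.univ.filter (fun w => ∀ k : Fin m, ¬ p < k → w k = 0) with hW
  have hWcard : W.card ≤ 2 ^ (m - 1 - (p : ℕ)) := by
    have : W.card ≤ (Finset.univ : Finset (Fin (m - 1 - (p : ℕ)) → Fin 2)).card := by
      apply Finset.card_le_card_of_injOn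
        (fun w => fun i : Fin (m - 1 - (p : ℕ)) => w ⟨(p : ℕ) + 1 + i, by omega⟩)
        (fun w _ => Finset.mem_univ _)
      intro w hw w' hw' hww
      rw [Finset.mem_coe, hW, Finset.mem_filter] at hw hw'
      funext k
      by_cases hpk : p < k
      · have hk1 : (p : ℕ) + 1 ≤ (k : ℕ) := hpk
        have hik : (k : ℕ) - (p : ℕ) - 1 < m - 1 - (p : ℕ) := by omega
        have h1 := congrFun hww ⟨(k : ℕ) - (p : ℕ) - 1, hik⟩
        simp only at h1
        have hkk : (⟨(p : ℕ) + 1 + ((k : ℕ) - (p : ℕ) - 1), by omega⟩ : Fin m) = k := by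
          apply Fin.ext; simp; omega
        rwa [hkk] at h1
      · rw [hw.2 k hpk, hw'.2 k hpk]
    simpa using this
  have hstep : (S.filter fun v => F v last = p).card
      ≤ ((Finset.Iio p).powersetCard (ℓ - 1) ×ˢ W).card := by
    apply Finset.card_le_card_of_injOn
      (fun v => ((Finset.image (F v) Finset.univ).erase p,
        fun k => if p < k then v k else 0))
    · -- maps to
      intro v hv
      rw [Finset.mem_coe, Finset.mem_filter] at hv
      obtain ⟨hvS, hvp⟩ := hv
      rw [Finset.mem_coe, Finset.mem_product]
      constructor
      · rw [Finset.mem_powersetCard]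
        constructor
        · intro x hx
          rw [Finset.mem_erase] at hx
          obtain ⟨hxp, hxim⟩ := hx
          obtain ⟨j, _, rfl⟩ := Finset.mem_image.1 hxim
          rw [Finset.mem_Iio]
          have hjle : j ≤ last := by
            rw [Fin.le_def]; simp [hlastdef]; omega
          have : F v j ≤ F v last := (hFsm v hvS).monotone hjle
          rw [hvp] at this
          exact lt_of_le_of_ne this hxp
        · have hpim : p ∈ Finset.image (F v) Finset.univ := by
            rw [← hvp]; exact Finset.mem_image_of_mem _ (Finset.mem_univ _)
          have hcard : (Finset.image (F v) Finset.univ).card = ℓ := by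
            rw [Finset.card_image_of_injective _ (hFsm v hvS).injective,
              Finset.card_univ, Fintype.card_fin]
          rw [Finset.card_erase_of_mem hpim, hcard]
      · rw [hW, Finset.mem_filter]
        exact ⟨Finset.mem_univ _, fun k hk => if_neg hk⟩
    · -- injective
      intro v hv v' hv' heq
      rw [Finset.mem_coe, Finset.mem_filter] at hv hv'
      obtain ⟨hvS, hvp⟩ := hv
      obtain ⟨hv'S, hv'p⟩ := hv'
      have h1 := congrArg Prod.fst heq
      have h2 := congrArg Prod.snd heq
      simp only at h1 h2
      have hpim : p ∈ Finset.image (F v) Finset.univ := by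
        rw [← hvp]; exact Finset.mem_image_of_mem _ (Finset.mem_univ _)
      have hpim' : p ∈ Finset.image (F v') Finset.univ := by
        rw [← hv'p]; exact Finset.mem_image_of_mem _ (Finset.mem_univ _)
      have him : Finset.image (F v) Finset.univ = Finset.image (F v') Finset.univ := by
        rw [← Finset.insert_erase hpim, ← Finset.insert_erase hpim', h1]
      have hcard : (Finset.image (F v) Finset.univ).card = ℓ := by
        rw [Finset.card_image_of_injective _ (hFsm v hvS).injective,
          Finset.card_univ, Fintype.card_fin]
      have hFeq : F v = F v' := by
        have e1 : F v = ⇑((Finset.image (F v) Finset.univ).orderEmbOfFin hcard) :=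
          Finset.orderEmbOfFin_unique hcard
            (fun x => Finset.mem_image_of_mem _ (Finset.mem_univ _)) (hFsm v hvS)
        have e2 : F v' = ⇑((Finset.image (F v) Finset.univ).orderEmbOfFin hcard) :=
          Finset.orderEmbOfFin_unique hcard
            (fun x => him ▸ Finset.mem_image_of_mem _ (Finset.mem_univ _)) (hFsm v' hv'S)
        exact e1.trans e2.symm
      funext k
      by_cases hk : k ∈ Finset.image (F v) Finset.univ
      · obtain ⟨j, _, rfl⟩ := Finset.mem_image.1 hk
        rw [hFval v hvS j, hFeq, hFval v' hv'S j]
      · by_cases hpk : p < k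
        · have := congrFun h2 k
          simpa [if_pos hpk] using this
        · -- k < p, k not in image
          have hkp : k < F v last := by
            rw [hvp]
            rcases lt_or_eq_of_le (not_lt.1 hpk) with h | h
            · exact h
            · exact absurd (h ▸ hpim) (h ▸ hk)
          set J : Finset (Fin ℓ) := Finset.univ.filter (fun j => k < F v j) with hJ
          have hJne : J.Nonempty := ⟨last, by rw [hJ, Finset.mem_filter]; exact ⟨Finset.mem_univ _, hkp⟩⟩
          set j0 := J.min' hJne with hj0
          have hj0J : j0 ∈ J := J.min'_mem hJne
          rw [hJ, Finset.mem_filter] at hj0J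
          have hprev : ∀ j' : Fin ℓ, j' < j0 → F v j' < k := by
            intro j' hj'
            have hj'J : j' ∉ J := fun hmem => absurd (J.min'_le j' hmem) (not_le.2 hj')
            rw [hJ, Finset.mem_filter] at hj'J
            have : ¬ k < F v j' := fun hc => hj'J ⟨Finset.mem_univ _, hc⟩
            rcases lt_or_eq_of_le (not_lt.1 this) with h | h
            · exact h
            · exact absurd (h ▸ Finset.mem_image_of_mem (F v) (Finset.mem_univ j') : k ∈ _) hk
          have hne1 : v k ≠ s j0 := hFmin v hvS j0 k hj0J.2 hprev
          have hne2 : v' k ≠ s j0 := by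
            apply hFmin v' hv'S j0 k
            · rw [← hFeq]; exact hj0J.2
            · intro j' hj'; rw [← hFeq]; exact hprev j' hj'
          exact fin2_eq_of_ne hne1 hne2
  calc (S.filter fun v => F v last = p).card
      ≤ ((Finset.Iio p).powersetCard (ℓ - 1) ×ˢ W).card := hstep
    _ = ((Finset.Iio p).powersetCard (ℓ - 1)).card * W.card := Finset.card_product _ _
    _ ≤ Nat.choose p (ℓ - 1) * 2 ^ (m - 1 - (p : ℕ)) := by
        apply Nat.mul_le_mul _ hWcard
        rw [Finset.card_powersetCard, Fin.card_Iio]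

lemma subs_card {ℓ m : ℕ} (hm : 0 < m) (u : Fin m → Fin 2)
    [∀ s : Fin ℓ → Fin 2, Decidable (IsSubseq s u)] :
    (Finset.univ.filter fun s : Fin ℓ → Fin 2 => IsSubseq s u).card ≤ m.choose ℓ := by
  classical
  set G : (Fin ℓ → Fin 2) → (Fin ℓ → Fin m) := fun s =>
    if h : IsSubseq s u then h.choose else fun _ => ⟨0, hm⟩ with hG
  have hGsm : ∀ s : Fin ℓ → Fin 2, IsSubseq s u →
      StrictMono (G s) ∧ ∀ j, u (G s j) = s j := by
    intro s h; rw [hG]; simp only [dif_pos h]; exact h.choose_spec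
  have hkey : (Finset.univ.filter fun s : Fin ℓ → Fin 2 => IsSubseq s u).card
      ≤ (Finset.powersetCard ℓ (Finset.univ : Finset (Fin m))).card := by
    apply Finset.card_le_card_of_injOn (fun s => Finset.image (G s) Finset.univ)
    · intro s hs
      rw [Finset.mem_coe, Finset.mem_filter] at hs
      rw [Finset.mem_coe, Finset.mem_powersetCard]
      refine ⟨Finset.subset_univ _, ?_⟩
      rw [Finset.card_image_of_injective _ (hGsm s hs.2).1.injective,
        Finset.card_univ, Fintype.card_fin]
    · intro sa ha sb hb heq
      rw [Finset.mem_coe, Finset.mem_filter] at ha hb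
      simp only at heq
      have hca : (Finset.image (G sa) Finset.univ).card = ℓ := by
        rw [Finset.card_image_of_injective _ (hGsm sa ha.2).1.injective,
          Finset.card_univ, Fintype.card_fin]
      have e1 : G sa = ⇑((Finset.image (G sa) Finset.univ).orderEmbOfFin hca) :=
        Finset.orderEmbOfFin_unique hca
          (fun x => Finset.mem_image_of_mem _ (Finset.mem_univ _)) (hGsm sa ha.2).1
      have e2 : G sb = ⇑((Finset.image (G sa) Finset.univ).orderEmbOfFin hca) :=
        Finset.orderEmbOfFin_unique hca
          (fun x => heq ▸ Finset.mem_image_of_mem _ (Finset.mem_univ _)) (hGsm sb hb.2).1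
      have hGeq : G sa = G sb := e1.trans e2.symm
      funext j
      rw [← (hGsm sa ha.2).2 j, hGeq, (hGsm sb hb.2).2 j]
  rwa [Finset.card_powersetCard, Finset.card_univ, Fintype.card_fin] at hkey

lemma choose_mul_choose_le (a b x y : ℕ) :
    a.choose x * b.choose y ≤ (a + b).choose (x + y) := by
  rw [Nat.add_choose_eq]
  exact Finset.single_le_sum (f := fun p : ℕ × ℕ => a.choose p.1 * b.choose p.2)
    (fun p _ => Nat.zero_le _)
    (show ((x, y) : ℕ × ℕ) ∈ Finset.HasAntidiagonal.antidiagonal (x + y) from Finset.HasAntidiagonal.mem_antidiagonal.2 rfl)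

lemma sum_term_le {ℓ m d : ℕ} (hℓ : 0 < ℓ) (hd : 0 < d) (hmd : ℓ + d = m) :
    ∑ p : Fin m, Nat.choose p (ℓ - 1) * 2 ^ (m - 1 - (p : ℕ))
      ≤ (d + 1) * ∑ i ∈ Finset.range (d + 1), m.choose i := by
  set S := ∑ i ∈ Finset.range (d + 1), m.choose i with hSdef
  have hterm : ∀ p : Fin m,
      Nat.choose p (ℓ - 1) * 2 ^ (m - 1 - (p : ℕ)) ≤ if ℓ - 1 ≤ (p : ℕ) then S else 0 := by
    intro p
    by_cases h : ℓ - 1 ≤ (p : ℕ)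
    · rw [if_pos h]
      set t := m - 1 - (p : ℕ) with ht
      have hpm : (p : ℕ) < m := p.isLt
      have htd : t ≤ d := by omega
      calc Nat.choose p (ℓ - 1) * 2 ^ t
          = ∑ j ∈ Finset.range (t + 1), Nat.choose p (ℓ - 1) * t.choose j := by
            rw [← Finset.mul_sum, Nat.sum_range_choose]
        _ ≤ ∑ j ∈ Finset.range (t + 1), m.choose (d - j) := by
            apply Finset.sum_le_sum
            intro j hj
            rw [Finset.mem_range] at hj
            calc Nat.choose p (ℓ - 1) * t.choose j ≤ ((p : ℕ) + t).choose (ℓ - 1 + j) :=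
                choose_mul_choose_le _ _ _ _
              _ = (m - 1).choose (ℓ - 1 + j) := by congr 1; omega
              _ = (m - 1).choose (d - j) := by
                  have h2 : ℓ - 1 + j = (m - 1) - (d - j) := by omega
                  rw [h2, Nat.choose_symm (by omega)]
              _ ≤ m.choose (d - j) := Nat.choose_le_choose _ (by omega)
        _ ≤ ∑ j ∈ Finset.range (d + 1), m.choose (d - j) := by
            apply Finset.sum_le_sum_of_subset
            exact Finset.range_subset_range.2 (by omega)
        _ = S := by
            rw [hSdef, ← Finset.sum_range_reflect (fun i => m.choose i) (d + 1)]
            simp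
    · rw [if_neg h, Nat.choose_eq_zero_of_lt (by omega), zero_mul]
  calc ∑ p : Fin m, Nat.choose p (ℓ - 1) * 2 ^ (m - 1 - (p : ℕ))
      ≤ ∑ p : Fin m, (if ℓ - 1 ≤ (p : ℕ) then S else 0) := Finset.sum_le_sum fun p _ => hterm p
    _ = ∑ p ∈ Finset.range m, (if ℓ - 1 ≤ p then S else 0) := by
        rw [← Fin.sum_univ_eq_sum_range]
    _ = ∑ _p ∈ (Finset.range m).filter (fun p => ℓ - 1 ≤ p), S := by
        rw [Finset.sum_filter]
    _ = ((Finset.range m).filter (fun p => ℓ - 1 ≤ p)).card * S := by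
        rw [Finset.sum_const, smul_eq_mul]
    _ = (d + 1) * S := by
        congr 1
        have h3 : (Finset.range m).filter (fun p => ℓ - 1 ≤ p) = Finset.Ico (ℓ - 1) m := by
          ext x; simp only [Finset.mem_filter, Finset.mem_range, Finset.mem_Ico]; omega
        rw [h3, Nat.card_Ico]; omega

lemma chernoff {m d : ℕ} {δ : ℝ} (hδ0 : 0 < δ) (hδ1 : δ < 1 / 2) (hdm : d ≤ m) :
    ((∑ i ∈ Finset.range (d + 1), m.choose i : ℕ) : ℝ)
      ≤ (1 / δ) ^ d * (1 / (1 - δ)) ^ (m - d) := by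
  have h1δ : (0:ℝ) < 1 - δ := by linarith
  have hδδ : δ ≤ 1 - δ := by linarith
  have full : ∑ i ∈ Finset.range (m + 1), δ ^ i * (1 - δ) ^ (m - i) * (m.choose i : ℝ) = 1 := by
    rw [← add_pow]
    norm_num
  have key : ((∑ i ∈ Finset.range (d + 1), m.choose i : ℕ) : ℝ) * (δ ^ d * (1 - δ) ^ (m - d))
      ≤ 1 := by
    calc ((∑ i ∈ Finset.range (d + 1), m.choose i : ℕ) : ℝ) * (δ ^ d * (1 - δ) ^ (m - d))
        = ∑ i ∈ Finset.range (d + 1), (m.choose i : ℝ) * (δ ^ d * (1 - δ) ^ (m - d)) := by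
          push_cast
          rw [Finset.sum_mul]
      _ ≤ ∑ i ∈ Finset.range (d + 1), δ ^ i * (1 - δ) ^ (m - i) * (m.choose i : ℝ) := by
          apply Finset.sum_le_sum
          intro i hi
          rw [Finset.mem_range] at hi
          have hid : i ≤ d := by omega
          have e1 : δ ^ d = δ ^ i * δ ^ (d - i) := by rw [← pow_add]; congr 1; omega
          have e2 : (1 - δ) ^ (m - i) = (1 - δ) ^ (d - i) * (1 - δ) ^ (m - d) := by
            rw [← pow_add]; congr 1; omega
          have e3 : δ ^ (d - i) ≤ (1 - δ) ^ (d - i) := pow_le_pow_left₀ hδ0.le hδδ _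
          have hstep : δ ^ d * (1 - δ) ^ (m - d) ≤ δ ^ i * (1 - δ) ^ (m - i) := by
            rw [e1, e2]
            calc δ ^ i * δ ^ (d - i) * (1 - δ) ^ (m - d)
                ≤ δ ^ i * (1 - δ) ^ (d - i) * (1 - δ) ^ (m - d) := by
                  apply mul_le_mul_of_nonneg_right _ (by positivity)
                  exact mul_le_mul_of_nonneg_left e3 (by positivity)
              _ = δ ^ i * ((1 - δ) ^ (d - i) * (1 - δ) ^ (m - d)) := by ring
          calc (m.choose i : ℝ) * (δ ^ d * (1 - δ) ^ (m - d))
              ≤ (m.choose i : ℝ) * (δ ^ i * (1 - δ) ^ (m - i)) :=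
                mul_le_mul_of_nonneg_left hstep (by positivity)
            _ = δ ^ i * (1 - δ) ^ (m - i) * (m.choose i : ℝ) := by ring
      _ ≤ ∑ i ∈ Finset.range (m + 1), δ ^ i * (1 - δ) ^ (m - i) * (m.choose i : ℝ) := by
          apply Finset.sum_le_sum_of_subset_of_nonneg (Finset.range_subset_range.2 (by omega))
          intro i _ _
          positivity
      _ = 1 := full
  have hpos : (0:ℝ) < δ ^ d * (1 - δ) ^ (m - d) := by positivity
  have h4 : ((∑ i ∈ Finset.range (d + 1), m.choose i : ℕ) : ℝ)
      ≤ 1 / (δ ^ d * (1 - δ) ^ (m - d)) := (le_div_iff₀ hpos).2 key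
  have h5 : (1 / δ) ^ d * (1 / (1 - δ)) ^ (m - d) = 1 / (δ ^ d * (1 - δ) ^ (m - d)) := by
    rw [div_pow, div_pow, one_pow, one_pow, div_mul_div_comm, one_mul]
  rw [h5]
  exact h4

lemma rpow_ent {δ : ℝ} (hδ0 : 0 < δ) (hδ1 : δ < 1 / 2) {m d : ℕ}
    (hdm : (d : ℝ) = δ * m) (hdm' : d ≤ m) :
    (2 : ℝ) ^ (binEnt δ * m) = (1 / δ) ^ d * (1 / (1 - δ)) ^ (m - d) := by
  have h1δ : (0:ℝ) < 1 - δ := by linarith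
  have e0 : binEnt δ * m = Real.logb 2 (1 / δ) * d + Real.logb 2 (1 / (1 - δ)) * ((m:ℝ) - d) := by
    rw [binEnt, hdm]; ring
  rw [e0, Real.rpow_add two_pos]
  congr 1
  · rw [Real.rpow_mul (le_of_lt two_pos), Real.rpow_logb two_pos (by norm_num) (by positivity),
      Real.rpow_natCast]
  · have : ((m:ℝ) - d) = ((m - d : ℕ) : ℝ) := by
      rw [Nat.cast_sub hdm']
    rw [this, Real.rpow_mul (le_of_lt two_pos), Real.rpow_logb two_pos (by norm_num) (by positivity),
      Real.rpow_natCast]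

/-- Let `δ ∈ (0, 1/2)` and let `m ≥ 1` with `δm` a positive integer. Then there exists a
code `C ⊆ {0,1}^m` with `|C| ≥ 2^{(1 - 2h(δ))m}/(2δm)` such that every two distinct
codewords of `C` have longest common subsequence of length less than `(1-δ)m`, i.e., no
string of length `⌈(1-δ)m⌉` is a common subsequence of two distinct codewords. -/
theorem greedy_binary_deletion_codes (δ : ℝ) (hδ0 : 0 < δ) (hδ1 : δ < 1 / 2)
    (m d : ℕ) (hm : 0 < m) (hd : 0 < d) (hdm : (d : ℝ) = δ * m) :
    ∃ C : Finset (Fin m → Fin 2),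
      (2 : ℝ) ^ ((1 - 2 * binEnt δ) * m) / (2 * δ * m) ≤ C.card ∧
      ∀ u ∈ C, ∀ v ∈ C, u ≠ v →
        ¬∃ s : Fin (⌈(1 - δ) * m⌉₊) → Fin 2, IsSubseq s u ∧ IsSubseq s v := by
  classical
  have h1δ : (0:ℝ) < 1 - δ := by linarith
  have hdm' : d < m := by
    have hmR : (0:ℝ) < m := by exact_mod_cast hm
    have : (d:ℝ) < m := by rw [hdm]; nlinarith
    exact_mod_cast this
  set ℓ := ⌈(1 - δ) * (m:ℝ)⌉₊ with hℓdef
  have hℓ : ℓ = m - d := by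
    rw [hℓdef]
    have h1 : (1 - δ) * (m:ℝ) = ((m - d : ℕ) : ℝ) := by
      rw [Nat.cast_sub hdm'.le, hdm]; ring
    rw [h1, Nat.ceil_natCast]
  have hℓpos : 0 < ℓ := by omega
  have hℓm : ℓ ≤ m := by omega
  have hℓd : ℓ + d = m := by omega
  set S := ∑ i ∈ Finset.range (d + 1), m.choose i with hSdef
  set D := S * ((d + 1) * S) with hDdef
  set r : (Fin m → Fin 2) → (Fin m → Fin 2) → Prop :=
    fun u v => ∃ s : Fin ℓ → Fin 2, IsSubseq s u ∧ IsSubseq s v with hr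
  have hsym : ∀ u v, r u v → r v u := fun u v ⟨s, h1, h2⟩ => ⟨s, h2, h1⟩
  have hrefl : ∀ u, r u u := by
    intro u
    have hsm : StrictMono (Fin.castLE hℓm) := fun a b hab => by
      rw [Fin.lt_def] at hab ⊢
      exact hab
    exact ⟨fun j => u (Fin.castLE hℓm j), ⟨Fin.castLE hℓm, hsm, fun j => rfl⟩,
      ⟨Fin.castLE hℓm, hsm, fun j => rfl⟩⟩
  have hD : ∀ u, (Finset.univ.filter (r u)).card ≤ D := by
    intro u
    have hsub : Finset.univ.filter (r u) ⊆
        (Finset.univ.filter fun s : Fin ℓ → Fin 2 => IsSubseq s u).biUnion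
          (fun s => Finset.univ.filter fun v => IsSubseq s v) := by
      intro v hv
      rw [Finset.mem_filter] at hv
      obtain ⟨-, s, h1, h2⟩ := hv
      exact Finset.mem_biUnion.2 ⟨s, Finset.mem_filter.2 ⟨Finset.mem_univ _, h1⟩,
        Finset.mem_filter.2 ⟨Finset.mem_univ _, h2⟩⟩
    have hub : ∀ s : Fin ℓ → Fin 2,
        (Finset.univ.filter fun v : Fin m → Fin 2 => IsSubseq s v).card ≤ (d + 1) * S :=
      fun s => le_trans (sup_card hℓpos hℓm s) (sum_term_le hℓpos hd hℓd)
    calc (Finset.univ.filter (r u)).card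
        ≤ ((Finset.univ.filter fun s : Fin ℓ → Fin 2 => IsSubseq s u).biUnion
            (fun s => Finset.univ.filter fun v => IsSubseq s v)).card :=
          Finset.card_le_card hsub
      _ ≤ ∑ s ∈ Finset.univ.filter fun s : Fin ℓ → Fin 2 => IsSubseq s u,
            (Finset.univ.filter fun v : Fin m → Fin 2 => IsSubseq s v).card :=
          Finset.card_biUnion_le
      _ ≤ ∑ _s ∈ Finset.univ.filter fun s : Fin ℓ → Fin 2 => IsSubseq s u, (d + 1) * S :=
          Finset.sum_le_sum fun s _ => hub s
      _ = (Finset.univ.filter fun s : Fin ℓ → Fin 2 => IsSubseq s u).card * ((d + 1) * S) := by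
          rw [Finset.sum_const, smul_eq_mul]
      _ ≤ m.choose ℓ * ((d + 1) * S) :=
          Nat.mul_le_mul_right _ (subs_card (lt_of_lt_of_le hℓpos hℓm) u)
      _ ≤ S * ((d + 1) * S) := by
          apply Nat.mul_le_mul_right
          have h1 : m.choose ℓ = m.choose d := by
            rw [hℓ, Nat.choose_symm hdm'.le]
          rw [h1, hSdef]
          exact Finset.single_le_sum (f := fun i => m.choose i) (fun i _ => Nat.zero_le _)
            (Finset.mem_range.2 (by omega))
  obtain ⟨C, hCsub, hind, hcount⟩ := greedy_lemma r hsym hrefl D hD Finset.univ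
  refine ⟨C, ?_, fun u hu v hv huv hex => hind u hu v hv huv hex⟩
  -- numeric part
  have hcard : 2 ^ m ≤ C.card * D := by
    have huniv : (Finset.univ : Finset (Fin m → Fin 2)).card = 2 ^ m := by
      rw [Finset.card_univ, Fintype.card_fun, Fintype.card_fin, Fintype.card_fin]
    rwa [huniv] at hcount
  set R : ℝ := (1 / δ) ^ d * (1 / (1 - δ)) ^ (m - d) with hR
  have hRpos : 0 < R := by rw [hR]; positivity
  have hSR : (S : ℝ) ≤ R := chernoff hδ0 hδ1 hdm'.le
  have hSnn : (0:ℝ) ≤ (S : ℝ) := Nat.cast_nonneg _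
  have hdR : (1:ℝ) ≤ d := by exact_mod_cast hd
  have hDR : (D : ℝ) ≤ 2 * d * R ^ 2 := by
    rw [hDdef]
    push_cast
    have h1 : (S:ℝ) * (((d:ℝ) + 1) * S) ≤ R * (((d:ℝ) + 1) * R) := by
      apply mul_le_mul hSR _ (by positivity) hRpos.le
      exact mul_le_mul_of_nonneg_left hSR (by positivity)
    calc (S:ℝ) * (((d:ℝ) + 1) * S) ≤ R * (((d:ℝ) + 1) * R) := h1
      _ = ((d:ℝ) + 1) * R ^ 2 := by ring
      _ ≤ 2 * d * R ^ 2 := by nlinarith [sq_nonneg R]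
  have h2m : (2:ℝ) ^ (m:ℕ) ≤ (C.card : ℝ) * (2 * d * R ^ 2) := by
    have c1 : ((2 ^ m : ℕ) : ℝ) ≤ ((C.card * D : ℕ) : ℝ) := Nat.cast_le.2 hcard
    push_cast at c1
    calc (2:ℝ) ^ (m:ℕ) ≤ (C.card : ℝ) * (D : ℝ) := c1
      _ ≤ (C.card : ℝ) * (2 * d * R ^ 2) :=
          mul_le_mul_of_nonneg_left hDR (Nat.cast_nonneg _)
  have hent : (2:ℝ) ^ (binEnt δ * m) = R := rpow_ent hδ0 hδ1 hdm hdm'.le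
  have hsplit : (2:ℝ) ^ ((1 - 2 * binEnt δ) * (m:ℝ)) = (2:ℝ) ^ (m:ℕ) / R ^ 2 := by
    have e1 : (1 - 2 * binEnt δ) * (m:ℝ) = (m:ℝ) - (binEnt δ * m) * 2 := by ring
    rw [e1, Real.rpow_sub two_pos, Real.rpow_natCast]
    congr 1
    rw [Real.rpow_mul (le_of_lt two_pos), hent]
    norm_num
  have h2δm : 2 * δ * (m:ℝ) = 2 * d := by rw [hdm]; ring
  rw [hsplit, h2δm]
  rw [div_le_iff₀ (by positivity), div_le_iff₀ (by positivity)]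
  calc (2:ℝ) ^ (m:ℕ) ≤ (C.card : ℝ) * (2 * d * R ^ 2) := h2m
    _ = (C.card : ℝ) * (2 * d) * R ^ 2 := by ring
end

section
/- There exist constants c > 0 and ε₀ > 0 such that for every ε ∈ (0, ε₀) with k = (4/ε)² an integer, and for every sufficiently large m, there exists a code C ⊆ [k]^m with |C| ≥ k^{c·ε·m/log₂(1/ε)} such that every two distinct codewords of C have longest common subsequence of length less than εm; that is, C has rate Ω(ε/log(1/ε)) and can be corrected from a 1−ε = 1−4/√k fraction of worst-case deletions. (Proposition 2.2 of the paper, obtained from a random code via the LCS concentration bound of Kiwi–Loebl–Matoušek.) -/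
/-- The "bad" relation: `u` and `v` share a common subsequence of length `ℓ`. -/
def BadRel (k ℓ m : ℕ) (u v : Fin m → Fin k) : Prop :=
  ∃ s : Fin ℓ → Fin k, IsSubseq s u ∧ IsSubseq s v

lemma badRel_symm {k ℓ m : ℕ} {u v : Fin m → Fin k} (h : BadRel k ℓ m u v) :
    BadRel k ℓ m v u := by
  obtain ⟨s, h1, h2⟩ := h; exact ⟨s, h2, h1⟩

lemma badRel_self {k ℓ m : ℕ} (h : ℓ ≤ m) (u : Fin m → Fin k) : BadRel k ℓ m u u := by
  refine ⟨fun j => u (Fin.castLE h j), ⟨Fin.castLE h, ?_, fun j => rfl⟩,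
    ⟨Fin.castLE h, ?_, fun j => rfl⟩⟩ <;>
  · exact fun a b hab => hab

open scoped Classical

/-- Counting lemma: the number of `v` sharing a common length-`ℓ` subsequence with a
fixed `u` is at most `(m.choose ℓ)² k^(m-ℓ)`. -/
lemma card_bad_le {k ℓ m : ℕ} (u : Fin m → Fin k) :
    (Finset.univ.filter fun v => BadRel k ℓ m u v).card ≤ m.choose ℓ ^ 2 * k ^ (m - ℓ) := by
  classical
  set T : Finset (Finset (Fin m) × Finset (Fin m) × (Fin (m - ℓ) → Fin k)) :=
    ((Finset.univ : Finset (Fin m)).powersetCard ℓ) ×ˢ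
      (((Finset.univ : Finset (Fin m)).powersetCard ℓ) ×ˢ
        (Finset.univ : Finset (Fin (m - ℓ) → Fin k))) with hTdef
  have hT : T.card = m.choose ℓ ^ 2 * k ^ (m - ℓ) := by
    simp [hTdef, Finset.card_powersetCard, Fintype.card_fun]
    ring
  rw [← hT]
  -- decoding map
  have hccompl : ∀ B : Finset (Fin m), B.card = ℓ → Bᶜ.card = m - ℓ := by
    intro B hB
    rw [Finset.card_compl, hB, Fintype.card_fin]
  refine Finset.card_le_card_of_surjOn
    (fun p : Finset (Fin m) × Finset (Fin m) × (Fin (m - ℓ) → Fin k) =>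
      if h : p.1.card = ℓ ∧ p.2.1.card = ℓ then
        (fun x =>
          if hx : x ∈ p.2.1 then
            u (p.1.orderEmbOfFin h.1 ((p.2.1.orderIsoOfFin h.2).symm ⟨x, hx⟩))
          else p.2.2 ((p.2.1ᶜ.orderIsoOfFin (hccompl _ h.2)).symm ⟨x, by simpa using hx⟩))
      else u) ?_
  rintro v hv
  simp only [Finset.coe_filter, Set.mem_setOf_eq, Finset.mem_univ, true_and] at hv
  obtain ⟨s, ⟨f, hf, hfu⟩, ⟨g, hg, hgv⟩⟩ := hv
  set A : Finset (Fin m) := Finset.univ.image f with hAdef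
  set B : Finset (Fin m) := Finset.univ.image g with hBdef
  have hA : A.card = ℓ := by
    rw [hAdef, Finset.card_image_of_injective _ hf.injective, Finset.card_univ, Fintype.card_fin]
  have hB : B.card = ℓ := by
    rw [hBdef, Finset.card_image_of_injective _ hg.injective, Finset.card_univ, Fintype.card_fin]
  have hfA : f = A.orderEmbOfFin hA :=
    Finset.orderEmbOfFin_unique hA (fun j => by simp [hAdef]) hf
  have hgB : g = B.orderEmbOfFin hB :=
    Finset.orderEmbOfFin_unique hB (fun j => by simp [hBdef]) hg
  refine ⟨(A, B, fun i => v (Bᶜ.orderEmbOfFin (hccompl _ hB) i)), ?_, ?_⟩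
  · simp [hTdef, Finset.mem_powersetCard, hA, hB]
  · beta_reduce
    rw [dif_pos (⟨hA, hB⟩ : A.card = ℓ ∧ B.card = ℓ)]
    funext x
    by_cases hx : x ∈ B
    · rw [dif_pos hx]
      -- x = g j for j = (B.orderIsoOfFin hB).symm ⟨x, hx⟩
      set j := (B.orderIsoOfFin hB).symm ⟨x, hx⟩ with hj
      have hxj : x = g j := by
        rw [hgB]
        have : B.orderIsoOfFin hB j = ⟨x, hx⟩ := by rw [hj, OrderIso.apply_symm_apply]
        calc x = ((B.orderIsoOfFin hB) j : Fin m) := by rw [this]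
        _ = B.orderEmbOfFin hB j := Finset.coe_orderIsoOfFin_apply B hB j
      rw [hxj, hgv j, ← hfu j, hfA]
    · rw [dif_neg hx]
      set i := (Bᶜ.orderIsoOfFin (hccompl _ hB)).symm ⟨x, by simpa using hx⟩ with hi
      have : Bᶜ.orderEmbOfFin (hccompl _ hB) i = x := by
        rw [← Finset.coe_orderIsoOfFin_apply, hi, OrderIso.apply_symm_apply]
      exact congrArg v this

/-- Greedy construction of a code of prescribed size avoiding common subsequences. -/
lemma exists_code (k ℓ m M : ℕ) (hℓm : ℓ ≤ m)
    (hM : M * (m.choose ℓ ^ 2 * k ^ (m - ℓ)) < k ^ m) :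
    ∃ C : Finset (Fin m → Fin k), C.card = M ∧
      ∀ u ∈ C, ∀ v ∈ C, u ≠ v → ¬ BadRel k ℓ m u v := by
  induction M with
  | zero => exact ⟨∅, by simp, by simp⟩
  | succ M ih =>
    obtain ⟨C, hcard, hgood⟩ := ih (lt_of_le_of_lt
      (Nat.mul_le_mul_right _ (Nat.le_succ M)) hM)
    set Bad : Finset (Fin m → Fin k) :=
      C.biUnion (fun u => Finset.univ.filter fun v => BadRel k ℓ m u v) with hBadDef
    have hBadcard : Bad.card < k ^ m := by
      calc Bad.card ≤ ∑ u ∈ C, (Finset.univ.filter fun v => BadRel k ℓ m u v).card :=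
            Finset.card_biUnion_le
        _ ≤ ∑ _u ∈ C, m.choose ℓ ^ 2 * k ^ (m - ℓ) :=
            Finset.sum_le_sum (fun u _ => card_bad_le u)
        _ = M * (m.choose ℓ ^ 2 * k ^ (m - ℓ)) := by rw [Finset.sum_const, hcard]; ring
        _ ≤ (M + 1) * (m.choose ℓ ^ 2 * k ^ (m - ℓ)) :=
            Nat.mul_le_mul_right _ (Nat.le_succ M)
        _ < k ^ m := hM
    have hex : ∃ v, v ∉ Bad := by
      by_contra h
      push_neg at h
      have h2 : (Finset.univ : Finset (Fin m → Fin k)).card ≤ Bad.card :=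
        Finset.card_le_card (fun v _ => h v)
      rw [Finset.card_univ, Fintype.card_fun, Fintype.card_fin, Fintype.card_fin] at h2
      omega
    obtain ⟨v, hv⟩ := hex
    have hnotbad : ∀ u ∈ C, ¬ BadRel k ℓ m u v := by
      intro u hu hbad
      exact hv (Finset.mem_biUnion.mpr ⟨u, hu, Finset.mem_filter.mpr ⟨Finset.mem_univ _, hbad⟩⟩)
    have hvC : v ∉ C := fun hvC => hnotbad v hvC (badRel_self hℓm v)
    refine ⟨insert v C, by rw [Finset.card_insert_of_notMem hvC, hcard], ?_⟩
    intro a ha b hb hab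
    rcases Finset.mem_insert.mp ha with ha' | ha' <;>
      rcases Finset.mem_insert.mp hb with hb' | hb'
    · exact absurd (ha'.trans hb'.symm) hab
    · exact fun hbad => hnotbad b hb' (badRel_symm (ha' ▸ hbad))
    · exact fun hbad => hnotbad a ha' (hb' ▸ hbad)
    · exact hgood a ha' b hb' hab

set_option maxHeartbeats 1600000 in
/-- There exist constants `c > 0` and `ε₀ > 0` such that for every `ε ∈ (0, ε₀)` with
`k = (4/ε)²` an integer, and every sufficiently large `m`, there exists a code
`C ⊆ [k]^m` with `|C| ≥ k^{cεm/log₂(1/ε)}` (i.e. of rate `Ω(ε/log(1/ε))`) such that every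
two distinct codewords have longest common subsequence of length less than `εm` (no
string of length `⌈εm⌉` is a common subsequence of two distinct codewords); that is, `C`
can be corrected from a `1 - ε = 1 - 4/√k` fraction of worst-case deletions. -/
theorem random_codes_high_deletion :
    ∃ c : ℝ, 0 < c ∧ ∃ ε₀ : ℝ, 0 < ε₀ ∧
      ∀ ε : ℝ, 0 < ε → ε < ε₀ → ∀ k : ℕ, (k : ℝ) = (4 / ε) ^ 2 →
        ∃ m₀ : ℕ, ∀ m : ℕ, m₀ ≤ m →
          ∃ C : Finset (Fin m → Fin k),
            (k : ℝ) ^ (c * ε * m / Real.logb 2 (1 / ε)) ≤ C.card ∧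
            ∀ u ∈ C, ∀ v ∈ C, u ≠ v →
              ¬∃ s : Fin (⌈ε * m⌉₊) → Fin k, IsSubseq s u ∧ IsSubseq s v := by
  refine ⟨1/100, by norm_num, 1/4, by norm_num, ?_⟩
  intro ε hε hε4 k hk
  have hε1 : ε < 1 := lt_trans hε4 (by norm_num)
  have hkpos : (0:ℝ) < k := by rw [hk]; positivity
  have hk0 : 0 < k := by exact_mod_cast hkpos
  refine ⟨⌈2/ε⌉₊, ?_⟩
  intro m hm
  have hmR : 2/ε ≤ (m:ℝ) := le_trans (Nat.le_ceil _) (by exact_mod_cast hm)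
  have hm2 : 2 ≤ ε * m := by
    rw [div_le_iff₀ hε] at hmR
    nlinarith
  set L := Real.logb 2 (1/ε) with hLdef
  have h4ε : (4:ℝ) ≤ 1/ε := by rw [le_div_iff₀ hε]; linarith
  set A := Real.log (1/ε) with hAdef
  have hlog2 : (0:ℝ) < Real.log 2 := Real.log_pos (by norm_num)
  have hA4 : Real.log 4 ≤ A := Real.log_le_log (by norm_num) h4ε
  have hA0 : (0:ℝ) < A := lt_of_lt_of_le (Real.log_pos (by norm_num)) hA4
  have hLA : L = A / Real.log 2 := rfl
  set ℓ := ⌈ε * (m:ℝ)⌉₊ with hℓdef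
  have hℓge : ε * m ≤ (ℓ:ℝ) := Nat.le_ceil _
  have hℓm : ℓ ≤ m := by
    rw [hℓdef, Nat.ceil_le]
    nlinarith [Nat.cast_nonneg (α := ℝ) m]
  have hℓpos : 0 < ℓ := by
    have : (0:ℝ) < ℓ := by linarith
    exact_mod_cast this
  set e₁ := 1/100 * ε * m / L with he₁def
  set M := ⌊(k:ℝ) ^ e₁⌋₊ + 1 with hMdef
  -- bound on the binomial coefficient
  set E := Real.exp 1 with hEdef
  have hE0 : (0:ℝ) < E := Real.exp_pos 1
  have hℓR : (0:ℝ) < (ℓ:ℝ) := by exact_mod_cast hℓpos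
  have hchoose : (m.choose ℓ : ℝ) ≤ (E/ε)^ℓ := by
    have h1 : (m.choose ℓ : ℝ) ≤ (m:ℝ)^ℓ / (Nat.factorial ℓ : ℝ) := Nat.choose_le_pow_div ℓ m
    have h2 : ((ℓ:ℝ))^ℓ / (Nat.factorial ℓ : ℝ) ≤ Real.exp ℓ :=
      Real.pow_div_factorial_le_exp (x := (ℓ:ℝ)) (by positivity) ℓ
    have hfac : (0:ℝ) < (Nat.factorial ℓ : ℝ) := by exact_mod_cast Nat.factorial_pos ℓ
    have hexpℓ : Real.exp (ℓ:ℝ) = E^ℓ := by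
      rw [hEdef, ← Real.exp_nat_mul]; norm_num
    have h3 : (m:ℝ)^ℓ / (Nat.factorial ℓ : ℝ) ≤ ((m:ℝ)/ℓ)^ℓ * E^ℓ := by
      rw [div_pow, div_mul_eq_mul_div, div_le_div_iff₀ hfac (by positivity)]
      calc (m:ℝ)^ℓ * (ℓ:ℝ)^ℓ
          = (m:ℝ)^ℓ * ((ℓ:ℝ)^ℓ / (Nat.factorial ℓ : ℝ) * (Nat.factorial ℓ : ℝ)) := by
            field_simp
        _ ≤ (m:ℝ)^ℓ * (Real.exp ℓ * (Nat.factorial ℓ : ℝ)) := by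
            have := mul_le_mul_of_nonneg_right h2 hfac.le
            exact mul_le_mul_of_nonneg_left this (by positivity)
        _ = (m:ℝ)^ℓ * E^ℓ * (Nat.factorial ℓ : ℝ) := by rw [hexpℓ]; ring
    have hbase : (m:ℝ)/ℓ * E ≤ E/ε := by
      rw [div_mul_eq_mul_div, div_le_div_iff₀ hℓR hε]
      nlinarith [mul_le_mul_of_nonneg_left hℓge hE0.le]
    have h4 : ((m:ℝ)/ℓ)^ℓ * E^ℓ ≤ (E/ε)^ℓ := by
      rw [← mul_pow]
      exact pow_le_pow_left₀ (by positivity) hbase ℓ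
    calc (m.choose ℓ : ℝ) ≤ (m:ℝ)^ℓ / (Nat.factorial ℓ : ℝ) := h1
      _ ≤ ((m:ℝ)/ℓ)^ℓ * E^ℓ := h3
      _ ≤ (E/ε)^ℓ := h4
  -- bound on M
  have hMle : (M:ℝ) ≤ (k:ℝ)^e₁ + 1 := by
    rw [hMdef]; push_cast
    exact add_le_add_left (Nat.floor_le (Real.rpow_nonneg hkpos.le _)) 1
  have hlogk : Real.log k = 2*(Real.log 4 + A) := by
    rw [hk, Real.log_pow, show (4:ℝ)/ε = 4*(1/ε) by ring,
      Real.log_mul (by norm_num) (by positivity), hAdef]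
    push_cast; ring
  have hL0 : 0 < L := by rw [hLA]; positivity
  have he₁eq : e₁ = ε*m*Real.log 2/(100*A) := by
    rw [he₁def, hLA]
    field_simp
  have hX0 : (0:ℝ) ≤ ε*(m:ℝ)*Real.log 2 := by positivity
  have he₁logk : e₁ * Real.log k ≤ ε*m*Real.log 2/25 := by
    rw [he₁eq, hlogk, div_mul_eq_mul_div, div_le_div_iff₀ (by positivity) (by norm_num)]
    nlinarith [mul_le_mul_of_nonneg_left hA4 hX0]
  have hk_rpow : (k:ℝ)^e₁ ≤ (2:ℝ)^(ε*m/25) := by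
    rw [Real.rpow_def_of_pos hkpos, Real.rpow_def_of_pos (by norm_num : (0:ℝ)<2)]
    apply Real.exp_le_exp.mpr
    calc Real.log k * e₁ = e₁ * Real.log k := by ring
      _ ≤ ε*m*Real.log 2/25 := he₁logk
      _ = Real.log 2 * (ε*m/25) := by ring
  have h2pow : (2:ℝ)^(ε*m/25) + 1 ≤ (2:ℝ)^((ℓ:ℝ)) := by
    have e1 : (2:ℝ)^(ε*m/25) ≤ (2:ℝ)^(ε*m-1) :=
      Real.rpow_le_rpow_of_exponent_le one_le_two (by linarith)
    have e2 : (1:ℝ) ≤ (2:ℝ)^(ε*m-1) := by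
      have := Real.rpow_le_rpow_of_exponent_le (x := 2) one_le_two
        (by linarith : (0:ℝ) ≤ ε*m-1)
      rwa [Real.rpow_zero] at this
    have e3 : (2:ℝ)^(ε*m-1) + (2:ℝ)^(ε*m-1) = (2:ℝ)^(ε*m) := by
      rw [show ε*m = 1 + (ε*m-1) by ring, Real.rpow_add (by norm_num : (0:ℝ)<2),
        Real.rpow_one]
      ring
    have e4 : (2:ℝ)^(ε*m) ≤ (2:ℝ)^((ℓ:ℝ)) :=
      Real.rpow_le_rpow_of_exponent_le one_le_two hℓge
    linarith
  have hM2ℓ : (M:ℝ) ≤ (2:ℝ)^ℓ := by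
    have h := hMle.trans (by linarith : (k:ℝ)^e₁ + 1 ≤ (2:ℝ)^((ℓ:ℝ)))
    rwa [Real.rpow_natCast] at h
  have key : (M:ℝ) * (m.choose ℓ:ℝ)^2 < (k:ℝ)^ℓ := by
    have hc2 : ((m.choose ℓ:ℝ))^2 ≤ ((E/ε)^ℓ)^2 :=
      pow_le_pow_left₀ (by positivity) hchoose 2
    have step : (M:ℝ) * (m.choose ℓ:ℝ)^2 ≤ (2:ℝ)^ℓ * ((E/ε)^ℓ)^2 :=
      mul_le_mul hM2ℓ hc2 (by positivity) (by positivity)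
    have heq : (2:ℝ)^ℓ * ((E/ε)^ℓ)^2 = (2*(E/ε)^2)^ℓ := by
      rw [mul_pow, ← pow_mul, ← pow_mul, mul_comm ℓ 2]
    have hE8 : E^2 < 8 := by
      have he : E < 2.7182818286 := Real.exp_one_lt_d9
      nlinarith
    have hbase : 2*(E/ε)^2 < (4/ε)^2 := by
      rw [div_pow, div_pow]
      rw [show (2:ℝ)*(E^2/ε^2) = (2*E^2)/ε^2 by ring]
      apply div_lt_div_of_pos_right ?_ (by positivity)
      nlinarith
    have hfin : (2*(E/ε)^2)^ℓ < ((4/ε)^2)^ℓ :=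
      pow_lt_pow_left₀ hbase (by positivity) hℓpos.ne'
    calc (M:ℝ) * (m.choose ℓ:ℝ)^2 ≤ (2:ℝ)^ℓ * ((E/ε)^ℓ)^2 := step
      _ = (2*(E/ε)^2)^ℓ := heq
      _ < ((4/ε)^2)^ℓ := hfin
      _ = (k:ℝ)^ℓ := by rw [hk]
  have keyN : M * (m.choose ℓ^2 * k^(m-ℓ)) < k ^ m := by
    have hkey2 : ((M * (m.choose ℓ^2 * k^(m-ℓ)) : ℕ) : ℝ) < ((k^m : ℕ) : ℝ) := by
      have hpow : (0:ℝ) < (k:ℝ)^(m-ℓ) := by positivity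
      have h5 := mul_lt_mul_of_pos_right key hpow
      rw [← pow_add, Nat.add_sub_cancel' hℓm] at h5
      push_cast at h5 ⊢
      linarith [h5]
    exact_mod_cast hkey2
  obtain ⟨C, hCcard, hCgood⟩ := exists_code k ℓ m M hℓm keyN
  refine ⟨C, ?_, ?_⟩
  · rw [hCcard]
    have h := (Nat.lt_floor_add_one ((k:ℝ)^e₁)).le
    calc (k:ℝ)^(1/100*ε*m/Real.logb 2 (1/ε)) = (k:ℝ)^e₁ := rfl
      _ ≤ (⌊(k:ℝ)^e₁⌋₊ : ℝ) + 1 := h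
      _ = (M:ℝ) := by rw [hMdef]; push_cast; ring
  · intro u hu v hv huv
    exact hCgood u hu v hv huv
end
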